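/- If A ⊂ ℝ^d is an infinite set, then for every θ < π there exist three points x, y, z ∈ A (with x ≠ y, z ≠ y) such that the angle ∠xyz exceeds θ. Equivalently, any set A with ∠A ≤ θ < π is finite. -/
import Mathlib

open EuclideanGeometry Real Filter Bornology Metric

local notation "⟪" x ", " y "⟫" => @inner ℝ _ _ x y

/-- Inner product of two unit-ish vectors close to a common unit vector is close to 1. -/
lemma inner_close_aux {E : Type*} [NormedAddCommGroup E] [InnerProductSpace ℝ E]
    (v a b : E) (hv : ‖v‖ = 1)
    {β : ℝ} (hβ0 : 0 ≤ β) (hβ : β ≤ 1) (ha : ‖a - v‖ ≤ β) (hb : ‖b - v‖ ≤ β) :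
    1 - 3 * β ≤ ⟪a, b⟫ := by
  have h1 : ⟪a, b⟫ = ⟪v, v⟫ + ⟪a - v, v⟫ + ⟪v, b - v⟫ + ⟪a - v, b - v⟫ := by
    simp only [inner_sub_left, inner_sub_right]
    ring
  have hvv : ⟪v, v⟫ = 1 := by
    rw [real_inner_self_eq_norm_sq, hv]; norm_num
  have h2 : |⟪a - v, v⟫| ≤ β := by
    calc |⟪a - v, v⟫| ≤ ‖a - v‖ * ‖v‖ := abs_real_inner_le_norm _ _
    _ ≤ β := by rw [hv]; simpa using ha
  have h3 : |⟪v, b - v⟫| ≤ β := by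
    calc |⟪v, b - v⟫| ≤ ‖v‖ * ‖b - v‖ := abs_real_inner_le_norm _ _
    _ ≤ β := by rw [hv]; simpa using hb
  have h4 : |⟪a - v, b - v⟫| ≤ β * β := by
    calc |⟪a - v, b - v⟫| ≤ ‖a - v‖ * ‖b - v‖ := abs_real_inner_le_norm _ _
    _ ≤ β * β := by exact mul_le_mul ha hb (norm_nonneg _) hβ0
  rw [h1, hvv]
  have := abs_le.mp h2
  have := abs_le.mp h3
  have := abs_le.mp h4
  nlinarith

set_option maxHeartbeats 1000000 in
/-- Key geometric lemma: if `x - y` is approximately `s • u1` and `z - y` is approximately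
`-t • u2` with `u1, u2` nearly equal unit vectors, then the angle `∠ x y z` exceeds `θ`. -/
lemma key_angle_lemma {E : Type*} [NormedAddCommGroup E] [InnerProductSpace ℝ E]
    (θ : ℝ) (hθ0 : 0 ≤ θ) (hθ : θ < Real.pi)
    {ε : ℝ} (hε0 : 0 < ε) (hε1 : ε ≤ 1/5) (hεθ : ε < (1 + Real.cos θ)/8)
    (x y z u1 u2 : E) (s t : ℝ)
    (hu1 : ‖u1‖ = 1) (hu2 : ‖u2‖ = 1) (huu : 1 - ε ≤ ⟪u1, u2⟫)
    (hs : 0 < s) (ht : 0 < t)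
    (hx : ‖x - y - s • u1‖ ≤ ε * s) (hz : ‖z - y + t • u2‖ ≤ ε * t) :
    x ≠ y ∧ z ≠ y ∧ θ < EuclideanGeometry.angle x y z := by
  set e1 := x - y - s • u1 with he1def
  set e2 := z - y + t • u2 with he2def
  have hb : x - y = s • u1 + e1 := by rw [he1def]; abel
  have hc : z - y = e2 - t • u2 := by rw [he2def]; abel
  have hnsu1 : ‖s • u1‖ = s := by
    rw [norm_smul, hu1, Real.norm_eq_abs, abs_of_pos hs, mul_one]
  have hntu2 : ‖t • u2‖ = t := by
    rw [norm_smul, hu2, Real.norm_eq_abs, abs_of_pos ht, mul_one]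
  -- norm bounds
  have hnb1 : s * (1 - ε) ≤ ‖x - y‖ := by
    have := norm_sub_norm_le (s • u1) (-e1)
    simp only [norm_neg] at this
    rw [hnsu1] at this
    have h2 : s • u1 - -e1 = x - y := by rw [hb]; abel
    rw [h2] at this
    nlinarith
  have hnb2 : ‖x - y‖ ≤ s * (1 + ε) := by
    rw [hb]
    calc ‖s • u1 + e1‖ ≤ ‖s • u1‖ + ‖e1‖ := norm_add_le _ _
    _ ≤ s + ε * s := by rw [hnsu1]; linarith
    _ = s * (1 + ε) := by ring
  have hnc1 : t * (1 - ε) ≤ ‖z - y‖ := by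
    have := norm_sub_norm_le (t • u2) e2
    rw [hntu2] at this
    have h2 : ‖t • u2 - e2‖ = ‖z - y‖ := by
      rw [show t • u2 - e2 = -(z - y) by rw [hc]; abel, norm_neg]
    rw [h2] at this
    nlinarith
  have hnc2 : ‖z - y‖ ≤ t * (1 + ε) := by
    rw [hc]
    calc ‖e2 - t • u2‖ ≤ ‖e2‖ + ‖t • u2‖ := norm_sub_le _ _
    _ ≤ ε * t + t := by rw [hntu2]; linarith
    _ = t * (1 + ε) := by ring
  have hxy : x ≠ y := by
    intro h
    rw [h, sub_self, norm_zero] at hnb1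
    nlinarith
  have hzy : z ≠ y := by
    intro h
    rw [h, sub_self, norm_zero] at hnc1
    nlinarith
  -- inner product bound
  have hip : ⟪x - y, z - y⟫ ≤ s * t * (-1 + 4 * ε) := by
    have hexp : ⟪x - y, z - y⟫ =
        s * ⟪u1, e2⟫ - s * (t * ⟪u1, u2⟫) + (⟪e1, e2⟫ - t * ⟪e1, u2⟫) := by
      rw [hb, hc]
      rw [inner_add_left, inner_sub_right, inner_sub_right,
        real_inner_smul_left, real_inner_smul_left, real_inner_smul_right,
        real_inner_smul_right]
    have h1 : |⟪u1, e2⟫| ≤ ε * t := by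
      calc |⟪u1, e2⟫| ≤ ‖u1‖ * ‖e2‖ := abs_real_inner_le_norm _ _
      _ ≤ ε * t := by rw [hu1, one_mul]; exact hz
    have h2 : |⟪e1, u2⟫| ≤ ε * s := by
      calc |⟪e1, u2⟫| ≤ ‖e1‖ * ‖u2‖ := abs_real_inner_le_norm _ _
      _ ≤ ε * s := by rw [hu2, mul_one]; exact hx
    have h3 : |⟪e1, e2⟫| ≤ (ε * s) * (ε * t) := by
      calc |⟪e1, e2⟫| ≤ ‖e1‖ * ‖e2‖ := abs_real_inner_le_norm _ _
      _ ≤ (ε * s) * (ε * t) := mul_le_mul hx hz (norm_nonneg _) (by positivity)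
    have hst : (0:ℝ) ≤ s * t := by positivity
    have k1 : s * ⟪u1, e2⟫ ≤ s * (ε * t) :=
      mul_le_mul_of_nonneg_left (abs_le.mp h1).2 hs.le
    have k2 : s * t * (1 - ε) ≤ s * t * ⟪u1, u2⟫ :=
      mul_le_mul_of_nonneg_left huu hst
    have k3 : ⟪e1, e2⟫ ≤ (ε * s) * (ε * t) := (abs_le.mp h3).2
    have k4 : -(ε * s) ≤ ⟪e1, u2⟫ := (abs_le.mp h2).1
    have k5 : t * -(ε * s) ≤ t * ⟪e1, u2⟫ := mul_le_mul_of_nonneg_left k4 ht.le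
    have hεst : ε * (s * t) ≤ 1 * (s * t) :=
      mul_le_mul_of_nonneg_right (by linarith) hst
    have k6 : (ε * s) * (ε * t) ≤ ε * (s * t) := by
      have : (ε * s) * (ε * t) = ε * (ε * (s * t)) := by ring
      rw [this]
      exact mul_le_mul_of_nonneg_left (by linarith) hε0.le
    rw [hexp]
    nlinarith [k1, k2, k3, k5, k6]
  -- main inequality : inner < cos θ * (‖x-y‖ * ‖z-y‖)
  have hs1 : (0:ℝ) < s * (1 - ε) := by nlinarith
  have ht1 : (0:ℝ) < t * (1 - ε) := by nlinarith
  have hprodpos : 0 < ‖x - y‖ * ‖z - y‖ :=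
    mul_pos (lt_of_lt_of_le hs1 hnb1) (lt_of_lt_of_le ht1 hnc1)
  have hmain : ⟪x - y, z - y⟫ < Real.cos θ * (‖x - y‖ * ‖z - y‖) := by
    rcases le_or_gt 0 (Real.cos θ) with hcos | hcos
    · have hstp := mul_pos hs ht
      have : ⟪x - y, z - y⟫ < 0 := lt_of_le_of_lt hip (by nlinarith)
      exact lt_of_lt_of_le this (mul_nonneg hcos hprodpos.le)
    · have hcos1 : -1 ≤ Real.cos θ := Real.neg_one_le_cos θ
      have hle : ‖x - y‖ * ‖z - y‖ ≤ (s * (1 + ε)) * (t * (1 + ε)) :=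
        mul_le_mul hnb2 hnc2 (norm_nonneg _) (by nlinarith)
      have : Real.cos θ * ((s * (1 + ε)) * (t * (1 + ε))) ≤
          Real.cos θ * (‖x - y‖ * ‖z - y‖) :=
        mul_le_mul_of_nonpos_left hle hcos.le
      refine lt_of_le_of_lt hip (lt_of_lt_of_le ?_ this)
      have hst : 0 < s * t := mul_pos hs ht
      have key : -1 + 4 * ε < Real.cos θ * (1 + ε) * (1 + ε) := by
        have hq : (0:ℝ) ≤ 2 * ε + ε * ε := by positivity
        have h1 : (-1) * (2 * ε + ε * ε) ≤ Real.cos θ * (2 * ε + ε * ε) :=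
          mul_le_mul_of_nonneg_right hcos1 hq
        have h2 : Real.cos θ * (1 + ε) * (1 + ε)
            = Real.cos θ + Real.cos θ * (2 * ε + ε * ε) := by ring
        have hε2 : ε * ε ≤ ε := by nlinarith
        rw [h2]
        linarith
      nlinarith
  have hcosangle : Real.cos (EuclideanGeometry.angle x y z) =
      ⟪x - y, z - y⟫ / (‖x - y‖ * ‖z - y‖) := by
    rw [EuclideanGeometry.angle, InnerProductGeometry.cos_angle]
    norm_num
  have hcoslt : Real.cos (EuclideanGeometry.angle x y z) < Real.cos θ := by
    rw [hcosangle, div_lt_iff₀ hprodpos]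
    exact hmain
  refine ⟨hxy, hzy, ?_⟩
  by_contra hle
  push_neg at hle
  have := Real.cos_le_cos_of_nonneg_of_le_pi
    (EuclideanGeometry.angle_nonneg x y z) hθ.le hle
  linarith

theorem exists_large_angle_of_infinite
    (d : ℕ) (A : Set (EuclideanSpace ℝ (Fin d))) (hA : A.Infinite)
    (θ : ℝ) (hθ : θ < Real.pi) :
    ∃ x ∈ A, ∃ y ∈ A, ∃ z ∈ A, x ≠ y ∧ z ≠ y ∧
      θ < EuclideanGeometry.angle x y z := by
  classical
  set θ' := max θ 0 with hθ'def
  have hθ'0 : 0 ≤ θ' := le_max_right _ _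
  have hθ'pi : θ' < Real.pi := max_lt hθ Real.pi_pos
  have hθθ' : θ ≤ θ' := le_max_left _ _
  have hcosθ' : -1 < Real.cos θ' := by
    have h := Real.strictAntiOn_cos ⟨hθ'0, hθ'pi.le⟩ ⟨Real.pi_pos.le, le_refl _⟩ hθ'pi
    rw [Real.cos_pi] at h
    exact h
  set ε := min (1/5 : ℝ) ((1 + Real.cos θ')/16) with hεdef
  have hε0 : 0 < ε := lt_min (by norm_num) (by linarith)
  have hε1 : ε ≤ 1/5 := min_le_left _ _
  have hεθ : ε < (1 + Real.cos θ')/8 :=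
    lt_of_le_of_lt (min_le_right _ _) (by linarith)
  set β := ε/3 with hβdef
  have hβ0 : 0 < β := by positivity
  have hβ1 : β ≤ 1 := by rw [hβdef]; linarith
  by_cases hbd : Bornology.IsBounded A
  · -- bounded case: accumulation point
    set p : ℕ → EuclideanSpace ℝ (Fin d) := fun n => ((Set.Infinite.natEmbedding A hA) n).1 with hpdef
    have hpA : ∀ n, p n ∈ A := fun n => ((Set.Infinite.natEmbedding A hA) n).2
    have hpinj : Function.Injective p :=
      Subtype.coe_injective.comp (Set.Infinite.natEmbedding A hA).injective
    obtain ⟨q, -, φ, hφ, hφlim⟩ := tendsto_subseq_of_bounded hbd hpA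
    have hinj2 : Function.Injective (p ∘ φ) := hpinj.comp hφ.injective
    obtain ⟨N, hN⟩ : ∃ N, ∀ n, p (φ (n + N)) ≠ q := by
      by_cases h : ∃ m, p (φ m) = q
      · obtain ⟨m, hm⟩ := h
        refine ⟨m + 1, fun n hne => ?_⟩
        have : n + (m + 1) = m := hinj2 (hne.trans hm.symm)
        omega
      · push_neg at h
        exact ⟨0, fun n => h _⟩
    set b : ℕ → EuclideanSpace ℝ (Fin d) := fun n => p (φ (n + N)) with hbdef
    have hblim : Filter.Tendsto b Filter.atTop (nhds q) :=
      hφlim.comp (Filter.tendsto_add_atTop_nat N)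
    have hdpos : ∀ n, 0 < ‖b n - q‖ := fun n =>
      norm_pos_iff.mpr (sub_ne_zero.mpr (hN n))
    set u : ℕ → EuclideanSpace ℝ (Fin d) :=
      fun n => ‖b n - q‖⁻¹ • (b n - q) with hudef
    have hu : ∀ n, u n ∈ Metric.sphere (0 : EuclideanSpace ℝ (Fin d)) 1 := by
      intro n
      rw [mem_sphere_zero_iff_norm, hudef]
      rw [norm_smul, norm_inv, norm_norm]
      exact inv_mul_cancel₀ (hdpos n).ne'
    obtain ⟨v, hv, ψ, hψ, hulim⟩ :=
      (isCompact_sphere (0 : EuclideanSpace ℝ (Fin d)) 1).tendsto_subseq hu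
    have hv1 : ‖v‖ = 1 := mem_sphere_zero_iff_norm.mp hv
    have hexist : ∀ r : ℝ, 0 < r → ∃ a, a ∈ A ∧ a ≠ q ∧ ‖a - q‖ < r ∧
        ‖(‖a - q‖⁻¹ • (a - q)) - v‖ ≤ β := by
      intro r hr
      obtain ⟨N1, hN1⟩ :=
        Metric.tendsto_atTop.mp (hblim.comp hψ.tendsto_atTop) r hr
      obtain ⟨N2, hN2⟩ := Metric.tendsto_atTop.mp hulim β hβ0
      set n := max N1 N2
      refine ⟨b (ψ n), hpA _, hN _, ?_, ?_⟩
      · have := hN1 n (le_max_left _ _)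
        rwa [Function.comp_apply, dist_eq_norm] at this
      · have := hN2 n (le_max_right _ _)
        rw [Function.comp_apply, dist_eq_norm] at this
        exact this.le
    obtain ⟨a1, ha1A, ha1q, ha1r, ha1v⟩ := hexist 1 one_pos
    have hd1 : 0 < ‖a1 - q‖ := norm_pos_iff.mpr (sub_ne_zero.mpr ha1q)
    obtain ⟨a2, ha2A, ha2q, ha2r, ha2v⟩ := hexist (ε * ‖a1 - q‖) (by positivity)
    have hd2 : 0 < ‖a2 - q‖ := norm_pos_iff.mpr (sub_ne_zero.mpr ha2q)
    obtain ⟨a3, ha3A, ha3q, ha3r, ha3v⟩ := hexist (ε * ‖a2 - q‖) (by positivity)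
    have hu1 : ‖(‖a1 - q‖⁻¹ • (a1 - q) : EuclideanSpace ℝ (Fin d))‖ = 1 := by
      rw [norm_smul, norm_inv, norm_norm]
      exact inv_mul_cancel₀ hd1.ne'
    have hu2 : ‖(‖a2 - q‖⁻¹ • (a2 - q) : EuclideanSpace ℝ (Fin d))‖ = 1 := by
      rw [norm_smul, norm_inv, norm_norm]
      exact inv_mul_cancel₀ hd2.ne'
    have huu : 1 - ε ≤ @inner ℝ _ _ (‖a1 - q‖⁻¹ • (a1 - q))
        (‖a2 - q‖⁻¹ • (a2 - q)) := by
      have h := inner_close_aux v _ _ hv1 hβ0.le hβ1 ha1v ha2v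
      have h3 : 1 - 3 * β = 1 - ε := by rw [hβdef]; ring
      linarith
    have hx : ‖a1 - a2 - ‖a1 - q‖ • (‖a1 - q‖⁻¹ • (a1 - q))‖ ≤ ε * ‖a1 - q‖ := by
      have heq : a1 - a2 - ‖a1 - q‖ • (‖a1 - q‖⁻¹ • (a1 - q)) = -(a2 - q) := by
        rw [smul_inv_smul₀ hd1.ne']
        abel
      rw [heq, norm_neg]
      exact ha2r.le
    have hz : ‖a3 - a2 + ‖a2 - q‖ • (‖a2 - q‖⁻¹ • (a2 - q))‖ ≤ ε * ‖a2 - q‖ := by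
      have heq : a3 - a2 + ‖a2 - q‖ • (‖a2 - q‖⁻¹ • (a2 - q)) = a3 - q := by
        rw [smul_inv_smul₀ hd2.ne']
        abel
      rw [heq]
      exact ha3r.le
    obtain ⟨hxy, hzy, hang⟩ := key_angle_lemma θ' hθ'0 hθ'pi hε0 hε1 hεθ
      a1 a2 a3 _ _ _ _ hu1 hu2 huu hd1 hd2 hx hz
    exact ⟨a1, ha1A, a2, ha2A, a3, ha3A, hxy, hzy, lt_of_le_of_lt hθθ' hang⟩
  · -- unbounded case
    rw [isBounded_iff_forall_norm_le] at hbd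
    push_neg at hbd
    have hub : ∀ C : ℝ, ∃ x ∈ A, C < ‖x‖ := by
      intro C
      obtain ⟨x, hxA, hx⟩ := hbd C
      exact ⟨x, hxA, hx⟩
    choose g hgA hgn using hub
    set a : ℕ → EuclideanSpace ℝ (Fin d) := fun n => g n with hadef
    have hapos : ∀ n, 0 < ‖a n‖ := fun n =>
      lt_of_le_of_lt (Nat.cast_nonneg n) (hgn n)
    set u : ℕ → EuclideanSpace ℝ (Fin d) := fun n => ‖a n‖⁻¹ • a n with hudef
    have hu : ∀ n, u n ∈ Metric.sphere (0 : EuclideanSpace ℝ (Fin d)) 1 := by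
      intro n
      rw [mem_sphere_zero_iff_norm, hudef]
      rw [norm_smul, norm_inv, norm_norm]
      exact inv_mul_cancel₀ (hapos n).ne'
    obtain ⟨v, hv, ψ, hψ, hulim⟩ :=
      (isCompact_sphere (0 : EuclideanSpace ℝ (Fin d)) 1).tendsto_subseq hu
    have hv1 : ‖v‖ = 1 := mem_sphere_zero_iff_norm.mp hv
    have hexist : ∀ R : ℝ, ∃ w, w ∈ A ∧ R < ‖w‖ ∧ ‖(‖w‖⁻¹ • w) - v‖ ≤ β := by
      intro R
      obtain ⟨N2, hN2⟩ := Metric.tendsto_atTop.mp hulim β hβ0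
      obtain ⟨K, hK⟩ := exists_nat_gt R
      set n := max N2 K
      refine ⟨a (ψ n), hgA _, ?_, ?_⟩
      · calc R < (K : ℝ) := hK
        _ ≤ (n : ℝ) := by exact_mod_cast Nat.cast_le.mpr (le_max_right _ _)
        _ ≤ (ψ n : ℝ) := by exact_mod_cast Nat.cast_le.mpr hψ.le_apply
        _ < ‖a (ψ n)‖ := hgn _
      · have := hN2 n (le_max_left _ _)
        rw [Function.comp_apply, dist_eq_norm] at this
        exact this.le
    obtain ⟨a1, ha1A⟩ := hA.nonempty
    obtain ⟨a2, ha2A, ha2n, ha2v⟩ := hexist (max (‖a1‖/ε) 0)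
    have hd2 : 0 < ‖a2‖ := lt_of_le_of_lt (le_max_right _ _) ha2n
    have ha1d2 : ‖a1‖ ≤ ε * ‖a2‖ := by
      have h1 : ‖a1‖/ε < ‖a2‖ := lt_of_le_of_lt (le_max_left _ _) ha2n
      rw [div_lt_iff₀ hε0] at h1
      linarith [h1]
    obtain ⟨a3, ha3A, ha3n, ha3v⟩ := hexist (‖a2‖/ε)
    have hd3 : 0 < ‖a3‖ := lt_of_le_of_lt (by positivity) ha3n
    have hd2d3 : ‖a2‖ ≤ ε * ‖a3‖ := by
      rw [div_lt_iff₀ hε0] at ha3n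
      linarith [ha3n]
    have hu1 : ‖(‖a3‖⁻¹ • a3 : EuclideanSpace ℝ (Fin d))‖ = 1 := by
      rw [norm_smul, norm_inv, norm_norm]
      exact inv_mul_cancel₀ hd3.ne'
    have hu2 : ‖(‖a2‖⁻¹ • a2 : EuclideanSpace ℝ (Fin d))‖ = 1 := by
      rw [norm_smul, norm_inv, norm_norm]
      exact inv_mul_cancel₀ hd2.ne'
    have huu : 1 - ε ≤ @inner ℝ _ _ (‖a3‖⁻¹ • a3) (‖a2‖⁻¹ • a2) := by
      have h := inner_close_aux v _ _ hv1 hβ0.le hβ1 ha3v ha2v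
      have h3 : 1 - 3 * β = 1 - ε := by rw [hβdef]; ring
      linarith
    have hx : ‖a3 - a2 - ‖a3‖ • (‖a3‖⁻¹ • a3)‖ ≤ ε * ‖a3‖ := by
      have heq : a3 - a2 - ‖a3‖ • (‖a3‖⁻¹ • a3) = -a2 := by
        rw [smul_inv_smul₀ hd3.ne']
        abel
      rw [heq, norm_neg]
      exact hd2d3
    have hz : ‖a1 - a2 + ‖a2‖ • (‖a2‖⁻¹ • a2)‖ ≤ ε * ‖a2‖ := by
      have heq : a1 - a2 + ‖a2‖ • (‖a2‖⁻¹ • a2) = a1 := by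
        rw [smul_inv_smul₀ hd2.ne']
        abel
      rw [heq]
      exact ha1d2
    obtain ⟨hxy, hzy, hang⟩ := key_angle_lemma θ' hθ'0 hθ'pi hε0 hε1 hεθ
      a3 a2 a1 _ _ _ _ hu1 hu2 huu hd3 hd2 hx hz
    exact ⟨a3, ha3A, a2, ha2A, a1, ha1A, hxy, hzy, lt_of_le_of_lt hθθ' hang⟩
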